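/- (Down-step contiguity for the series solution.) For each k with 1 ≤ k ≤ n and every point x ∈ U₀, ∂F(α;x)/∂x_{1k} = α_k · F(α − e_k; x), where F(α − e_k; ·) denotes the series F built from the shifted parameter vector in which α_k is replaced by α_k − 1 (with the same γ), and e_k is the k-th standard unit vector. -/

import Mathlib

open Complex Function Polynomial

/-- Partial derivative of `f` with respect to the coordinate `p`. -/
noncomputable def pd {n : ℕ} (p : Fin 2 × Fin n)
    (f : ((Fin 2 × Fin n) → ℝ) → ℂ) (x : (Fin 2 × Fin n) → ℝ) : ℂ :=
  deriv (fun s : ℝ => f (Function.update x p s)) (x p)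

/-- The coefficient
`c_m = (−1)^{|m|} (∏ₖ (−α_k)_{m_k}) (b^{γ+|m|+1} − a^{γ+|m|+1}) / ((γ+|m|+1) ∏ₖ m_k!)`,
where `(z)_j` is the Pochhammer symbol. -/
noncomputable def cm {n : ℕ} (α : Fin n → ℂ) (γ : ℂ) (a b : ℝ)
    (m : Fin n → ℕ) : ℂ :=
  (-1 : ℂ) ^ (∑ k, m k) * (∏ k, (ascPochhammer ℂ (m k)).eval (-(α k)))
    * ((b : ℂ) ^ (γ + ((∑ k, m k : ℕ) : ℂ) + 1)
        - (a : ℂ) ^ (γ + ((∑ k, m k : ℕ) : ℂ) + 1))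
    / ((γ + ((∑ k, m k : ℕ) : ℂ) + 1) * ∏ k, ((m k).factorial : ℂ))

/-- The series `F(x) = (∏ₖ x_{1k}^{α_k}) Σ_{m ∈ ℕⁿ} c_m ∏ₖ (x_{2k}/x_{1k})^{m_k}`;
the first row of `x` is indexed by `0 : Fin 2`, the second row by `1 : Fin 2`. -/
noncomputable def Fser {n : ℕ} (α : Fin n → ℂ) (γ : ℂ) (a b : ℝ)
    (x : (Fin 2 × Fin n) → ℝ) : ℂ :=
  (∏ k, (x (0, k) : ℂ) ^ (α k)) *
    ∑' m : Fin n → ℕ, cm α γ a b m * ∏ k, ((x (1, k) / x (0, k) : ℝ) : ℂ) ^ m k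

open Filter Topology

section AuxLemmas

lemma asc_eval_nonneg (j : ℕ) {x : ℝ} (hx : 0 ≤ x) : 0 ≤ (ascPochhammer ℝ j).eval x := by
  induction j with
  | zero => simp [ascPochhammer_zero]
  | succ j ih =>
    rw [ascPochhammer_succ_right]
    simp only [eval_mul, eval_add, eval_X, eval_natCast]
    positivity

lemma asc_eval_pos' (j : ℕ) {x : ℝ} (hx : 0 < x) : (0:ℝ) < (ascPochhammer ℝ j).eval x := by
  induction j with
  | zero => simp [ascPochhammer_zero]
  | succ j ih =>
    rw [ascPochhammer_succ_right]
    simp only [eval_mul, eval_add, eval_X, eval_natCast]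
    positivity

lemma asc_eval_mono (j : ℕ) {x y : ℝ} (hx : 0 ≤ x) (hxy : x ≤ y) :
    (ascPochhammer ℝ j).eval x ≤ (ascPochhammer ℝ j).eval y := by
  induction j with
  | zero => simp [ascPochhammer_zero]
  | succ j ih =>
    rw [ascPochhammer_succ_right]
    simp only [eval_mul, eval_add, eval_X, eval_natCast]
    apply mul_le_mul ih (by linarith) (by linarith) (asc_eval_nonneg j (hx.trans hxy))

lemma asc_eval_norm_le (z : ℂ) (j : ℕ) :
    ‖(ascPochhammer ℂ j).eval z‖ ≤ (ascPochhammer ℝ j).eval ‖z‖ := by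
  induction j with
  | zero => simp [ascPochhammer_zero]
  | succ j ih =>
    rw [ascPochhammer_succ_right (S := ℂ), ascPochhammer_succ_right (S := ℝ)]
    simp only [eval_mul, eval_add, eval_X, eval_natCast, norm_mul]
    apply mul_le_mul ih ?_ (norm_nonneg _) (asc_eval_nonneg j (norm_nonneg z))
    calc ‖z + (j : ℂ)‖ ≤ ‖z‖ + ‖(j : ℂ)‖ := norm_add_le _ _
      _ = ‖z‖ + j := by simp

lemma asc_contig (z : ℂ) (j : ℕ) :
    (ascPochhammer ℂ j).eval z * (z + j) = z * (ascPochhammer ℂ j).eval (z + 1) := by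
  have h1 := ascPochhammer_succ_right ℂ j
  have h2 := ascPochhammer_succ_left ℂ j
  have := congrArg (Polynomial.eval z) (h1.symm.trans h2)
  simpa [eval_mul, eval_comp] using this

lemma tendsto_shift_div (u v : ℝ) (hv : 0 < v) :
    Tendsto (fun j : ℕ => (u + j) / (v + j)) atTop (𝓝 1) := by
  have hq : Tendsto (fun j : ℕ => (v : ℝ) + j) atTop atTop :=
    tendsto_atTop_add_const_left _ v tendsto_natCast_atTop_atTop
  have h0 : Tendsto (fun j : ℕ => (u - v) / (v + j)) atTop (𝓝 0) :=
    Tendsto.div_atTop tendsto_const_nhds hq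
  have : Tendsto (fun j : ℕ => 1 + (u - v) / (v + j)) atTop (𝓝 1) := by
    simpa using tendsto_const_nhds.add h0
  apply this.congr
  intro j
  have hvj : (v : ℝ) + j ≠ 0 := by positivity
  field_simp
  ring

lemma aux_summable_ratio (c A : ℝ) (hc : 0 ≤ c) (hA : 0 ≤ A) {ρ : ℝ} (hρ0 : 0 ≤ ρ) (hρ1 : ρ < 1) :
    Summable (fun j : ℕ => (A + 1 + j) * ((ascPochhammer ℝ j).eval (c + 1) / (j.factorial : ℝ)) * ρ ^ j) := by
  set r := max ρ (1/2) with hr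
  have hr0 : 0 < r := lt_of_lt_of_le (by norm_num) (le_max_right _ _)
  have hr1 : r < 1 := max_lt hρ1 (by norm_num)
  have hρr : ρ ≤ r := le_max_left _ _
  set f : ℕ → ℝ := fun j => (A + 1 + j) * ((ascPochhammer ℝ j).eval (c + 1) / (j.factorial : ℝ)) * r ^ j with hf
  have hfpos : ∀ j, 0 < f j := by
    intro j
    have := asc_eval_pos' j (show (0:ℝ) < c + 1 by linarith)
    have hj : (0:ℝ) < (j.factorial : ℝ) := by positivity
    positivity
  have hsum : Summable f := by
    apply summable_of_ratio_test_tendsto_lt_one hr1 (Filter.Eventually.of_forall fun j => (hfpos j).ne')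
    have key : ∀ j : ℕ, ‖f (j+1)‖ / ‖f j‖ = ((A + 2 + j) / (A + 1 + j)) * ((c + 1 + j) / (1 + j)) * r := by
      intro j
      rw [Real.norm_of_nonneg (hfpos _).le, Real.norm_of_nonneg (hfpos _).le, hf]
      simp only []
      rw [ascPochhammer_succ_right]
      simp only [eval_mul, eval_add, eval_X, eval_natCast, Nat.factorial_succ, Nat.cast_mul,
        pow_succ, Nat.cast_add, Nat.cast_one]
      have h1 : (0:ℝ) < A + 1 + j := by positivity
      have h2 : (0:ℝ) < (ascPochhammer ℝ j).eval (c + 1) := asc_eval_pos' j (by linarith)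
      have h3 : (0:ℝ) < (j.factorial : ℝ) := by positivity
      have h4 : (0:ℝ) < r ^ j := pow_pos hr0 j
      field_simp
      ring
    rw [show (𝓝 r) = 𝓝 ((1:ℝ) * 1 * r) by norm_num]
    apply Tendsto.congr (fun j => (key j).symm)
    exact ((tendsto_shift_div (A+2) (A+1) (by linarith)).mul
      (tendsto_shift_div (c+1) 1 one_pos)).mul tendsto_const_nhds
  apply hsum.of_nonneg_of_le
  · intro j
    have := asc_eval_pos' j (show (0:ℝ) < c + 1 by linarith)
    have hj : (0:ℝ) < (j.factorial : ℝ) := by positivity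
    positivity
  · intro j
    have h2 : (0:ℝ) ≤ (A + 1 + j) * ((ascPochhammer ℝ j).eval (c + 1) / (j.factorial : ℝ)) := by
      have := asc_eval_pos' j (show (0:ℝ) < c + 1 by linarith)
      have hj : (0:ℝ) < (j.factorial : ℝ) := by positivity
      positivity
    exact mul_le_mul_of_nonneg_left (pow_le_pow_left₀ hρ0 hρr j) h2

lemma summable_pi_prod {n : ℕ} (v : Fin n → ℕ → ℝ) (h0 : ∀ l j, 0 ≤ v l j)
    (hs : ∀ l, Summable (v l)) :
    Summable (fun m : Fin n → ℕ => ∏ l, v l (m l)) := by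
  apply summable_of_sum_le (c := ∏ l, ∑' j, v l j)
  · intro m
    exact Finset.prod_nonneg fun l _ => h0 l (m l)
  · intro F
    set N := F.sup (fun m => ∑ l, m l) with hN
    have hsub : F ⊆ Fintype.piFinset (fun _ : Fin n => Finset.range (N + 1)) := by
      intro m hm
      rw [Fintype.mem_piFinset]
      intro l
      rw [Finset.mem_range]
      have h1 : m l ≤ ∑ l', m l' := Finset.single_le_sum (fun i _ => Nat.zero_le _) (Finset.mem_univ l)
      have h2 : (∑ l', m l') ≤ N := Finset.le_sup (f := fun m : Fin n → ℕ => ∑ l, m l) hm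
      exact Nat.lt_succ_of_le (h1.trans h2)
    calc ∑ m ∈ F, ∏ l, v l (m l)
        ≤ ∑ m ∈ Fintype.piFinset (fun _ : Fin n => Finset.range (N + 1)), ∏ l, v l (m l) :=
          Finset.sum_le_sum_of_subset_of_nonneg hsub
            (fun m _ _ => Finset.prod_nonneg fun l _ => h0 l (m l))
      _ = ∏ l, ∑ j ∈ Finset.range (N + 1), v l j := (Finset.prod_univ_sum _ _).symm
      _ ≤ ∏ l, ∑' j, v l j := by
          apply Finset.prod_le_prod
          · intro l _
            exact Finset.sum_nonneg fun j _ => h0 l j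
          · intro l _
            exact Summable.sum_le_tsum _ (fun j _ => h0 l j) (hs l)

lemma aux_inv_bound (γ : ℂ) :
    ∃ C : ℝ, 0 ≤ C ∧ ∀ j : ℕ, ‖(γ + j + 1)⁻¹‖ ≤ C := by
  set N := ⌈‖γ‖⌉₊ with hN
  refine ⟨1 + ∑ i ∈ Finset.range N, ‖(γ + i + 1)⁻¹‖, by positivity, fun j => ?_⟩
  by_cases hj : j < N
  · have h1 : ‖(γ + j + 1)⁻¹‖ ≤ ∑ i ∈ Finset.range N, ‖(γ + i + 1)⁻¹‖ :=
      Finset.single_le_sum (f := fun i : ℕ => ‖(γ + (i:ℂ) + 1)⁻¹‖) (fun i _ => norm_nonneg _) (Finset.mem_range.mpr hj)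
    linarith
  · push_neg at hj
    have hγN : ‖γ‖ ≤ N := Nat.le_ceil _
    have h2 : (1:ℝ) ≤ ‖γ + j + 1‖ := by
      have h3 : ‖((j:ℂ) + 1)‖ ≤ ‖γ + j + 1‖ + ‖γ‖ := by
        calc ‖((j:ℂ) + 1)‖ = ‖(γ + j + 1) - γ‖ := by ring_nf
          _ ≤ ‖γ + j + 1‖ + ‖γ‖ := norm_sub_le _ _
      have h4 : ‖((j:ℂ) + 1)‖ = (j : ℝ) + 1 := by
        rw [show ((j:ℂ) + 1) = ((j + 1 : ℕ) : ℂ) by push_cast; ring, Complex.norm_natCast]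
        push_cast; ring
      have h5 : (N : ℝ) ≤ j := by exact_mod_cast hj
      have := hγN.trans h5
      linarith [h3, h4 ▸ h3]
    have h6 : ‖(γ + j + 1)⁻¹‖ ≤ 1 := by
      rw [norm_inv]
      exact inv_le_one_of_one_le₀ h2
    have h7 : (0:ℝ) ≤ ∑ i ∈ Finset.range N, ‖(γ + i + 1)⁻¹‖ :=
      Finset.sum_nonneg fun i _ => norm_nonneg _
    linarith

lemma rpow_le_max {c d s r : ℝ} (hc : 0 < c) (hcs : c ≤ s) (hsd : s ≤ d) :
    s ^ r ≤ max (c ^ r) (d ^ r) := by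
  rcases le_or_gt 0 r with hr | hr
  · exact le_max_of_le_right (Real.rpow_le_rpow (hc.le.trans hcs) hsd hr)
  · exact le_max_of_le_left (Real.rpow_le_rpow_of_nonpos hc hcs hr.le)

end AuxLemmas

/-- down-step contiguity for the series solution:
`∂F(α;x)/∂x_{1k} = α_k · F(α − e_k; x)` on `U₀`. -/
theorem stmt19 {n : ℕ} (hn : 1 ≤ n) (α : Fin n → ℂ) (γ : ℂ) (a b : ℝ)
    (ha : 0 < a) (hab : a < b) (hγ : ∀ j : ℕ, γ ≠ -((j : ℂ) + 1))
    (k : Fin n) (x : (Fin 2 × Fin n) → ℝ) (hx : ∀ p, 0 < x p)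
    (hU : ∀ l, x (1, l) * b < x (0, l)) :
    pd (0, k) (Fser α γ a b) x
      = α k * Fser (Function.update α k (α k - 1)) γ a b x := by
  classical
  have hb : 0 < b := ha.trans hab
  set s₀ := x (0, k) with hs₀def
  set t := x (1, k) with htdef
  have ht : 0 < t := hx _
  have hs₀pos : 0 < s₀ := hx _
  have htb : t * b < s₀ := hU k
  have htbpos : 0 < t * b := by positivity
  obtain ⟨c, hc0, htbc, hcs⟩ : ∃ c : ℝ, 0 < c ∧ t * b < c ∧ c < s₀ :=
    ⟨(t * b + s₀) / 2, by positivity, by linarith, by linarith⟩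
  obtain ⟨d, hsd⟩ : ∃ d : ℝ, s₀ < d := ⟨s₀ + 1, by linarith⟩
  have hcd : c < d := hcs.trans hsd
  set S : Set ℝ := Set.Ioo c d with hSdef
  have hs₀S : s₀ ∈ S := ⟨hcs, hsd⟩
  -- row constants
  have hupd1 : ∀ (s : ℝ) (l : Fin n), Function.update x (0,k) s (1,l) = x (1,l) := by
    intro s l
    apply Function.update_of_ne
    simp [Prod.ext_iff]
  have hupd0ne : ∀ (s : ℝ) (l : Fin n), l ≠ k → Function.update x (0,k) s (0,l) = x (0,l) := by
    intro s l hl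
    apply Function.update_of_ne
    simp [Prod.ext_iff, hl]
  have hupd0k : ∀ (s : ℝ), Function.update x (0,k) s (0,k) = s := by
    intro s; exact Function.update_self _ _ _
  -- basic objects
  set Rm : (Fin n → ℕ) → ℂ := fun m => ∏ l ∈ Finset.univ.erase k, ((x (1,l) / x (0,l) : ℝ) : ℂ) ^ m l with hRmdef
  set K : ℂ := ∏ l ∈ Finset.univ.erase k, (x (0,l) : ℂ) ^ α l with hKdef
  set B : (Fin n → ℕ) → ℂ := fun m => K * cm α γ a b m * Rm m * (t : ℂ) ^ m k with hBdef
  set h : (Fin n → ℕ) → ℝ → ℂ := fun m s =>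
    (∏ l, ((Function.update x (0,k) s (0,l) : ℝ) : ℂ) ^ α l) *
      (cm α γ a b m *
        ∏ l, ((Function.update x (0,k) s (1,l) / Function.update x (0,k) s (0,l) : ℝ) : ℂ) ^ m l) with hhdef
  set h' : (Fin n → ℕ) → ℝ → ℂ := fun m s => B m * ((α k - m k) * (s : ℂ) ^ (α k - (m k:ℂ) - 1)) with hh'def
  -- closed form of h on positive reals
  have hkey : ∀ (s : ℝ), 0 < s → ∀ m, h m s = B m * (s : ℂ) ^ (α k - (m k : ℂ)) := by
    intro s hs m
    have hsne : (s : ℂ) ≠ 0 := Complex.ofReal_ne_zero.mpr hs.ne'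
    have e1 : (∏ l, ((Function.update x (0,k) s (0,l) : ℝ) : ℂ) ^ α l) = (s:ℂ) ^ (α k) * K := by
      rw [← Finset.mul_prod_erase Finset.univ _ (Finset.mem_univ k), hupd0k]
      rw [hKdef]
      congr 1
      exact Finset.prod_congr rfl fun l hl => by rw [hupd0ne s l (Finset.ne_of_mem_erase hl)]
    have e2 : (∏ l, ((Function.update x (0,k) s (1,l) / Function.update x (0,k) s (0,l) : ℝ) : ℂ) ^ m l)
        = ((t / s : ℝ) : ℂ) ^ m k * Rm m := by
      rw [← Finset.mul_prod_erase Finset.univ _ (Finset.mem_univ k), hupd1, hupd0k, hRmdef]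
      congr 1
      exact Finset.prod_congr rfl fun l hl => by
        rw [hupd1, hupd0ne s l (Finset.ne_of_mem_erase hl)]
    rw [hhdef]
    simp only []
    rw [e1, e2, hBdef]
    simp only []
    have e3 : ((t / s : ℝ) : ℂ) = (t : ℂ) / (s : ℂ) := by push_cast; ring
    have e5 : (s:ℂ) ^ (α k - (m k : ℂ)) = (s:ℂ) ^ (α k) / (s:ℂ) ^ (m k : ℕ) := by
      rw [Complex.cpow_sub _ _ hsne, Complex.cpow_natCast]
    rw [e3, div_pow, e5]
    ring
  -- the function g
  have hg_eq : ∀ s : ℝ, Fser α γ a b (Function.update x (0,k) s) = ∑' m, h m s := by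
    intro s
    rw [Fser, ← tsum_mul_left]
  -- derivative of each term
  have hderiv : ∀ m, ∀ s ∈ S, HasDerivAt (h m) (h' m s) s := by
    intro m s hs
    have hspos : 0 < s := hc0.trans hs.1
    have hcp : HasDerivAt (fun y : ℝ => ((y:ℂ)) ^ (α k - (m k:ℂ)))
        ((α k - (m k:ℂ)) * (s:ℂ) ^ (α k - (m k:ℂ) - 1)) s :=
      (Complex.hasStrictDerivAt_cpow_const
        (Complex.ofReal_mem_slitPlane.mpr hspos)).hasDerivAt.comp_ofReal
    have hnice : HasDerivAt (fun y : ℝ => B m * ((y:ℂ)) ^ (α k - (m k:ℂ))) (h' m s) s := by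
      rw [hh'def]
      exact hcp.const_mul (B m)
    apply hnice.congr_of_eventuallyEq
    filter_upwards [isOpen_Ioi.mem_nhds (show s ∈ Set.Ioi (0:ℝ) from hspos)] with y hy
    exact hkey y hy m
  -- the coefficient bound
  obtain ⟨Cγ, hCγ0, hCγ⟩ := aux_inv_bound γ
  set Cab : ℝ := b ^ (γ.re + 1) + a ^ (γ.re + 1) with hCabdef
  have hCab : 0 < Cab := by
    rw [hCabdef]
    have := Real.rpow_pos_of_pos ha (γ.re + 1)
    have := Real.rpow_pos_of_pos hb (γ.re + 1)
    linarith
  have hcm : ∀ m : Fin n → ℕ, ‖cm α γ a b m‖ ≤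
      Cγ * Cab * ∏ l, (b ^ m l * ((ascPochhammer ℝ (m l)).eval ‖α l‖ / ((m l).factorial : ℝ))) := by
    intro m
    set sm : ℕ := ∑ l, m l with hsm
    have hfac0 : (0:ℝ) < ∏ l, ((m l).factorial : ℝ) := by positivity
    have hre : (γ + (sm:ℂ) + 1).re = γ.re + 1 + (sm:ℝ) := by simp; ring
    have hbn : ‖(b:ℂ) ^ (γ + (sm:ℂ) + 1)‖ = b ^ (γ.re + 1) * b ^ (sm:ℕ) := by
      rw [Complex.norm_cpow_eq_rpow_re_of_pos hb, hre,
        Real.rpow_add hb, Real.rpow_natCast]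
    have han : ‖(a:ℂ) ^ (γ + (sm:ℂ) + 1)‖ = a ^ (γ.re + 1) * a ^ (sm:ℕ) := by
      rw [Complex.norm_cpow_eq_rpow_re_of_pos ha, hre,
        Real.rpow_add ha, Real.rpow_natCast]
    have hD : ‖(b:ℂ) ^ (γ + (sm:ℂ) + 1) - (a:ℂ) ^ (γ + (sm:ℂ) + 1)‖ ≤ Cab * b ^ sm := by
      calc ‖(b:ℂ) ^ (γ + (sm:ℂ) + 1) - (a:ℂ) ^ (γ + (sm:ℂ) + 1)‖
          ≤ ‖(b:ℂ) ^ (γ + (sm:ℂ) + 1)‖ + ‖(a:ℂ) ^ (γ + (sm:ℂ) + 1)‖ := norm_sub_le _ _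
        _ = b ^ (γ.re + 1) * b ^ sm + a ^ (γ.re + 1) * a ^ sm := by rw [hbn, han]
        _ ≤ b ^ (γ.re + 1) * b ^ sm + a ^ (γ.re + 1) * b ^ sm := by
            have h1 : a ^ sm ≤ b ^ sm := pow_le_pow_left₀ ha.le hab.le sm
            have h2 : (0:ℝ) ≤ a ^ (γ.re + 1) := (Real.rpow_pos_of_pos ha _).le
            nlinarith
        _ = Cab * b ^ sm := by rw [hCabdef]; ring
    have hP : ‖∏ l, (ascPochhammer ℂ (m l)).eval (-(α l))‖
        ≤ ∏ l, (ascPochhammer ℝ (m l)).eval ‖α l‖ := by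
      rw [norm_prod]
      apply Finset.prod_le_prod (fun l _ => norm_nonneg _)
      intro l _
      have := asc_eval_norm_le (-(α l)) (m l)
      rwa [norm_neg] at this
    have hPn : (0:ℝ) ≤ ∏ l, (ascPochhammer ℝ (m l)).eval ‖α l‖ :=
      Finset.prod_nonneg fun l _ => asc_eval_nonneg _ (norm_nonneg _)
    have hγn : ‖((γ + (sm:ℂ) + 1))⁻¹‖ ≤ Cγ := hCγ sm
    have hFn : ‖(∏ l, (((m l).factorial : ℕ) : ℂ))‖ = ∏ l, ((m l).factorial : ℝ) := by
      rw [norm_prod]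
      exact Finset.prod_congr rfl fun l _ => by rw [Complex.norm_natCast]
    have hsplit : (∏ l, (b ^ m l * ((ascPochhammer ℝ (m l)).eval ‖α l‖ / ((m l).factorial : ℝ))))
        = (∏ l, (ascPochhammer ℝ (m l)).eval ‖α l‖) * b ^ sm * (∏ l, ((m l).factorial : ℝ))⁻¹ := by
      rw [Finset.prod_mul_distrib, Finset.prod_pow_eq_pow_sum, Finset.prod_div_distrib, hsm]
      ring
    have hγn' : ‖γ + (sm:ℂ) + 1‖⁻¹ ≤ Cγ := by rw [← norm_inv]; exact hCγ sm
    have hEq : cm α γ a b m = ((-1:ℂ)^sm * (∏ l, (ascPochhammer ℂ (m l)).eval (-(α l))) *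
        ((b:ℂ) ^ (γ + (sm:ℂ) + 1) - (a:ℂ) ^ (γ + (sm:ℂ) + 1))) *
        ((γ + (sm:ℂ) + 1)⁻¹ * (∏ l, (((m l).factorial : ℕ):ℂ))⁻¹) := by
      unfold cm
      rw [div_eq_mul_inv, mul_inv, hsm]
    rw [hsplit, hEq]
    calc ‖((-1:ℂ)^sm * (∏ l, (ascPochhammer ℂ (m l)).eval (-(α l))) *
          ((b:ℂ) ^ (γ + (sm:ℂ) + 1) - (a:ℂ) ^ (γ + (sm:ℂ) + 1))) *
          ((γ + (sm:ℂ) + 1)⁻¹ * (∏ l, (((m l).factorial : ℕ):ℂ))⁻¹)‖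
        = ‖∏ l, (ascPochhammer ℂ (m l)).eval (-(α l))‖ *
          ‖(b:ℂ) ^ (γ + (sm:ℂ) + 1) - (a:ℂ) ^ (γ + (sm:ℂ) + 1)‖ *
          (‖γ + (sm:ℂ) + 1‖⁻¹ * (∏ l, ((m l).factorial : ℝ))⁻¹) := by
          simp only [norm_mul, norm_inv, norm_pow, norm_neg, norm_one, one_pow, one_mul]
          rw [hFn]
      _ ≤ (∏ l, (ascPochhammer ℝ (m l)).eval ‖α l‖) * (Cab * b ^ sm) *
            (Cγ * (∏ l, ((m l).factorial : ℝ))⁻¹) := by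
          apply mul_le_mul (mul_le_mul hP hD (norm_nonneg _) hPn)
          · exact mul_le_mul_of_nonneg_right hγn' (by positivity)
          · positivity
          · have : (0:ℝ) ≤ Cab * b ^ sm := by positivity
            exact mul_nonneg hPn this
      _ = Cγ * Cab * ((∏ l, (ascPochhammer ℝ (m l)).eval ‖α l‖) * b ^ sm *
            (∏ l, ((m l).factorial : ℝ))⁻¹) := by ring
  -- ratios
  set q : Fin n → ℝ := fun l => if l = k then t / c else x (1,l) / x (0,l) with hqdef
  have hq0 : ∀ l, 0 < q l := by
    intro l
    rw [hqdef]
    by_cases hl : l = k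
    · simp only [hl, if_pos]
      positivity
    · simp only [hl, if_neg, if_false]
      have := hx (1,l); have := hx (0,l); positivity
  have hρ1 : ∀ l, b * q l < 1 := by
    intro l
    rw [hqdef]
    by_cases hl : l = k
    · simp only [hl, if_pos]
      have he : b * (t / c) = t * b / c := by ring
      rw [he, div_lt_one hc0]
      exact htbc
    · simp only [hl, if_false]
      have h0l := hx (0,l)
      have he : b * (x (1,l) / x (0,l)) = x (1,l) * b / x (0,l) := by ring
      rw [he, div_lt_one h0l]
      exact hU l
  set V : Fin n → ℕ → ℝ := fun l j =>
    (‖α l‖ + 1 + j) * ((ascPochhammer ℝ j).eval (‖α l‖ + 1) / (j.factorial : ℝ)) * (b * q l) ^ j with hVdef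
  have hV0 : ∀ l j, 0 ≤ V l j := by
    intro l j
    rw [hVdef]
    have h1 := asc_eval_pos' j (show (0:ℝ) < ‖α l‖ + 1 by positivity)
    have h2 : (0:ℝ) < (j.factorial : ℝ) := by positivity
    have h3 : 0 < b * q l := by have := hq0 l; positivity
    positivity
  set w : (Fin n → ℕ) → ℝ := fun m => ∏ l, V l (m l) with hwdef
  have hw0 : ∀ m, 0 ≤ w m := fun m => Finset.prod_nonneg fun l _ => hV0 l (m l)
  have hsumw : Summable w := by
    apply summable_pi_prod _ hV0
    intro l
    rw [hVdef]
    exact aux_summable_ratio ‖α l‖ ‖α l‖ (norm_nonneg _) (norm_nonneg _)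
      (by have := hq0 l; positivity) (hρ1 l)
  -- core estimate
  have hcore : ∀ m : Fin n → ℕ, ‖cm α γ a b m‖ * ((‖α k‖ + 1 + m k) * ∏ l, q l ^ m l)
      ≤ Cγ * Cab * w m := by
    intro m
    have hq' : ∀ l : Fin n, (0:ℝ) ≤ q l ^ m l := fun l => (pow_pos (hq0 l) _).le
    have hfk : (0:ℝ) ≤ ‖α k‖ + 1 + m k := by positivity
    have hf1 : ∀ l : Fin n, (1:ℝ) ≤ ‖α l‖ + 1 + m l := by
      intro l
      have h1 : (0:ℝ) ≤ ‖α l‖ := norm_nonneg _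
      have h2 : (0:ℝ) ≤ (m l : ℝ) := by positivity
      linarith
    have hρnn : ∀ l : Fin n, (0:ℝ) ≤ (b * q l) ^ m l := fun l => (pow_pos (mul_pos hb (hq0 l)) _).le
    have hqp0 : (0:ℝ) ≤ (‖α k‖ + 1 + m k) * ∏ l, q l ^ m l :=
      mul_nonneg hfk (Finset.prod_nonneg fun l _ => hq' l)
    have step2 : (∏ l, (b ^ m l * ((ascPochhammer ℝ (m l)).eval ‖α l‖ / ((m l).factorial : ℝ)))) *
        (∏ l, q l ^ m l)
        = ∏ l, (((ascPochhammer ℝ (m l)).eval ‖α l‖ / ((m l).factorial : ℝ)) * (b * q l) ^ m l) := by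
      rw [← Finset.prod_mul_distrib]
      exact Finset.prod_congr rfl fun l _ => by rw [mul_pow]; ring
    have step4 : (∏ l, (((ascPochhammer ℝ (m l)).eval ‖α l‖ / ((m l).factorial : ℝ)) * (b * q l) ^ m l))
        ≤ ∏ l, (((ascPochhammer ℝ (m l)).eval (‖α l‖ + 1) / ((m l).factorial : ℝ)) * (b * q l) ^ m l) := by
      apply Finset.prod_le_prod
      · intro l _
        have h0 : (0:ℝ) ≤ (ascPochhammer ℝ (m l)).eval ‖α l‖ := asc_eval_nonneg _ (norm_nonneg _)
        have h3 : (0:ℝ) < ((m l).factorial : ℝ) := by positivity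
        exact mul_nonneg (div_nonneg h0 h3.le) (hρnn l)
      · intro l _
        have h1 : (ascPochhammer ℝ (m l)).eval ‖α l‖ ≤ (ascPochhammer ℝ (m l)).eval (‖α l‖ + 1) :=
          asc_eval_mono _ (norm_nonneg _) (by linarith)
        have h3 : (0:ℝ) < ((m l).factorial : ℝ) := by positivity
        exact mul_le_mul_of_nonneg_right ((div_le_div_iff_of_pos_right h3).mpr h1) (hρnn l)
    have hWnn : (0:ℝ) ≤ ∏ l, (((ascPochhammer ℝ (m l)).eval (‖α l‖ + 1) / ((m l).factorial : ℝ)) * (b * q l) ^ m l) := by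
      apply Finset.prod_nonneg
      intro l _
      have h0 : (0:ℝ) ≤ (ascPochhammer ℝ (m l)).eval (‖α l‖ + 1) := asc_eval_nonneg _ (by positivity)
      have h3 : (0:ℝ) < ((m l).factorial : ℝ) := by positivity
      exact mul_nonneg (div_nonneg h0 h3.le) (hρnn l)
    have step5 : (‖α k‖ + 1 + (m k : ℝ)) ≤ ∏ l, (‖α l‖ + 1 + (m l : ℝ)) := by
      have h1 : (1:ℝ) ≤ ∏ l ∈ Finset.univ.erase k, (‖α l‖ + 1 + (m l : ℝ)) :=
        calc (1:ℝ) = ∏ _l ∈ Finset.univ.erase k, (1:ℝ) := Finset.prod_const_one.symm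
          _ ≤ ∏ l ∈ Finset.univ.erase k, (‖α l‖ + 1 + (m l : ℝ)) :=
            Finset.prod_le_prod (fun _ _ => zero_le_one) (fun l _ => hf1 l)
      rw [← Finset.mul_prod_erase Finset.univ (fun l => ‖α l‖ + 1 + (m l : ℝ)) (Finset.mem_univ k)]
      exact le_mul_of_one_le_right (by linarith [hf1 k]) h1
    have step6 : (∏ l, (‖α l‖ + 1 + (m l : ℝ))) *
        (∏ l, (((ascPochhammer ℝ (m l)).eval (‖α l‖ + 1) / ((m l).factorial : ℝ)) * (b * q l) ^ m l)) = w m := by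
      rw [hwdef, hVdef, ← Finset.prod_mul_distrib]
      exact Finset.prod_congr rfl fun l _ => by ring
    calc ‖cm α γ a b m‖ * ((‖α k‖ + 1 + m k) * ∏ l, q l ^ m l)
        ≤ (Cγ * Cab * ∏ l, (b ^ m l * ((ascPochhammer ℝ (m l)).eval ‖α l‖ / ((m l).factorial : ℝ)))) *
          ((‖α k‖ + 1 + m k) * ∏ l, q l ^ m l) := mul_le_mul_of_nonneg_right (hcm m) hqp0
      _ = (Cγ * Cab) * ((‖α k‖ + 1 + m k) *
            ((∏ l, (b ^ m l * ((ascPochhammer ℝ (m l)).eval ‖α l‖ / ((m l).factorial : ℝ)))) *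
              (∏ l, q l ^ m l))) := by ring
      _ = (Cγ * Cab) * ((‖α k‖ + 1 + m k) *
            ∏ l, (((ascPochhammer ℝ (m l)).eval ‖α l‖ / ((m l).factorial : ℝ)) * (b * q l) ^ m l)) := by
          rw [step2]
      _ ≤ (Cγ * Cab) * ((‖α k‖ + 1 + m k) *
            ∏ l, (((ascPochhammer ℝ (m l)).eval (‖α l‖ + 1) / ((m l).factorial : ℝ)) * (b * q l) ^ m l)) := by
          apply mul_le_mul_of_nonneg_left (mul_le_mul_of_nonneg_left step4 hfk)
          positivity
      _ ≤ (Cγ * Cab) * ((∏ l, (‖α l‖ + 1 + (m l : ℝ))) *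
            ∏ l, (((ascPochhammer ℝ (m l)).eval (‖α l‖ + 1) / ((m l).factorial : ℝ)) * (b * q l) ^ m l)) := by
          apply mul_le_mul_of_nonneg_left (mul_le_mul_of_nonneg_right step5 hWnn)
          positivity
      _ = Cγ * Cab * w m := by rw [step6]
  -- norm of B
  have hBnorm : ∀ m : Fin n → ℕ, ‖B m‖ = ‖K‖ * ‖cm α γ a b m‖ *
      ((∏ l ∈ Finset.univ.erase k, (x (1,l) / x (0,l)) ^ m l) * t ^ m k) := by
    intro m
    have hRmnorm : ‖Rm m‖ = ∏ l ∈ Finset.univ.erase k, (x (1,l) / x (0,l)) ^ m l := by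
      rw [hRmdef]
      simp only []
      rw [norm_prod]
      refine Finset.prod_congr rfl fun l hl => ?_
      rw [norm_pow, Complex.norm_real,
        Real.norm_of_nonneg (le_of_lt (div_pos (hx (1,l)) (hx (0,l))))]
    have htnorm : ‖(t:ℂ) ^ m k‖ = t ^ m k := by
      rw [norm_pow, Complex.norm_real, Real.norm_of_nonneg ht.le]
    rw [hBdef]
    simp only []
    rw [norm_mul, norm_mul, norm_mul, hRmnorm, htnorm]
    ring
  have hqprod : ∀ m : Fin n → ℕ,
      (∏ l ∈ Finset.univ.erase k, (x (1,l) / x (0,l)) ^ m l) * (t/c) ^ m k = ∏ l, q l ^ m l := by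
    intro m
    rw [← Finset.mul_prod_erase Finset.univ (fun l => q l ^ m l) (Finset.mem_univ k)]
    rw [mul_comm]
    congr 1
    · rw [hqdef]; simp
    · exact Finset.prod_congr rfl fun l hl => by
        rw [hqdef]; simp only [if_neg (Finset.ne_of_mem_erase hl)]
  -- bound for h and h' on S
  set M : ℝ := max (c ^ (α k).re) (d ^ (α k).re) with hMdef
  set M' : ℝ := max (c ^ ((α k).re - 1)) (d ^ ((α k).re - 1)) with hM'def
  have hM0 : 0 < M := lt_max_of_lt_left (Real.rpow_pos_of_pos hc0 _)
  have hM'0 : 0 < M' := lt_max_of_lt_left (Real.rpow_pos_of_pos hc0 _)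
  have hKn : (0:ℝ) ≤ ‖K‖ := norm_nonneg _
  have hqprodnn : ∀ m : Fin n → ℕ, (0:ℝ) ≤ ∏ l, q l ^ m l :=
    fun m => Finset.prod_nonneg fun l _ => (pow_pos (hq0 l) _).le
  have hRtnn : ∀ m : Fin n → ℕ, (0:ℝ) ≤ (∏ l ∈ Finset.univ.erase k, (x (1,l) / x (0,l)) ^ m l) * t ^ m k := by
    intro m
    apply mul_nonneg
    · exact Finset.prod_nonneg fun l _ => pow_nonneg (div_pos (hx (1,l)) (hx (0,l))).le _
    · exact pow_nonneg ht.le _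
  have hone_le : ∀ m : Fin n → ℕ, (1:ℝ) ≤ ‖α k‖ + 1 + m k := by
    intro m
    have h2 : (0:ℝ) ≤ (m k : ℝ) := by positivity
    linarith [norm_nonneg (α k)]
  have hfinish : ∀ (m : Fin n → ℕ) (M₀ A : ℝ), 0 < M₀ → 0 ≤ A → A ≤ ‖α k‖ + 1 + m k →
      ‖K‖ * ‖cm α γ a b m‖ * ((∏ l ∈ Finset.univ.erase k, (x (1,l) / x (0,l)) ^ m l) * t ^ m k) *
        (A * (M₀ / c ^ m k)) ≤ (‖K‖ * M₀ * (Cγ * Cab)) * w m := by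
    intro m M₀ A hM₀ hA0 hA
    have hc1 : (0:ℝ) < c ^ m k := pow_pos hc0 _
    have e1 : ‖K‖ * ‖cm α γ a b m‖ * ((∏ l ∈ Finset.univ.erase k, (x (1,l) / x (0,l)) ^ m l) * t ^ m k) *
        (A * (M₀ / c ^ m k))
        = (‖K‖ * M₀) * (‖cm α γ a b m‖ * (A *
            ((∏ l ∈ Finset.univ.erase k, (x (1,l) / x (0,l)) ^ m l) * (t / c) ^ m k))) := by
      rw [div_pow, div_eq_mul_inv, div_eq_mul_inv]
      ring
    rw [e1, hqprod m]
    have e2 : ‖cm α γ a b m‖ * (A * ∏ l, q l ^ m l)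
        ≤ ‖cm α γ a b m‖ * ((‖α k‖ + 1 + m k) * ∏ l, q l ^ m l) := by
      apply mul_le_mul_of_nonneg_left _ (norm_nonneg _)
      exact mul_le_mul_of_nonneg_right hA (hqprodnn m)
    calc (‖K‖ * M₀) * (‖cm α γ a b m‖ * (A * ∏ l, q l ^ m l))
        ≤ (‖K‖ * M₀) * (‖cm α γ a b m‖ * ((‖α k‖ + 1 + m k) * ∏ l, q l ^ m l)) := by
          apply mul_le_mul_of_nonneg_left e2
          positivity
      _ ≤ (‖K‖ * M₀) * (Cγ * Cab * w m) := by
          apply mul_le_mul_of_nonneg_left (hcore m)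
          positivity
      _ = (‖K‖ * M₀ * (Cγ * Cab)) * w m := by ring
  have hbound1 : ∀ (m : Fin n → ℕ), ∀ s ∈ S, ‖h m s‖ ≤ (‖K‖ * M * (Cγ * Cab)) * w m := by
    intro m s hs
    have hspos : 0 < s := hc0.trans hs.1
    have hnorm1 : ‖(s:ℂ) ^ (α k - (m k:ℂ))‖ = s ^ ((α k).re) / s ^ (m k) := by
      rw [Complex.norm_cpow_eq_rpow_re_of_pos hspos]
      rw [show (α k - (m k:ℂ)).re = (α k).re - (m k : ℝ) by simp]
      rw [Real.rpow_sub hspos, Real.rpow_natCast]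
    have hs1 : s ^ ((α k).re) ≤ M := rpow_le_max hc0 hs.1.le hs.2.le
    have hs2 : s ^ ((α k).re) / s ^ (m k) ≤ M / c ^ (m k) :=
      div_le_div₀ hM0.le hs1 (pow_pos hc0 _) (pow_le_pow_left₀ hc0.le hs.1.le _)
    rw [hkey s hspos m, norm_mul, hnorm1, hBnorm m]
    calc ‖K‖ * ‖cm α γ a b m‖ * ((∏ l ∈ Finset.univ.erase k, (x (1,l) / x (0,l)) ^ m l) * t ^ m k) *
          (s ^ ((α k).re) / s ^ (m k))
        ≤ ‖K‖ * ‖cm α γ a b m‖ * ((∏ l ∈ Finset.univ.erase k, (x (1,l) / x (0,l)) ^ m l) * t ^ m k) *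
          (1 * (M / c ^ (m k))) := by
          rw [one_mul]
          apply mul_le_mul_of_nonneg_left hs2
          exact mul_nonneg (mul_nonneg (norm_nonneg _) (norm_nonneg _)) (hRtnn m)
      _ ≤ (‖K‖ * M * (Cγ * Cab)) * w m := hfinish m M 1 hM0 zero_le_one (hone_le m)
  have hbound2 : ∀ (m : Fin n → ℕ), ∀ s ∈ S, ‖h' m s‖ ≤ (‖K‖ * M' * (Cγ * Cab)) * w m := by
    intro m s hs
    have hspos : 0 < s := hc0.trans hs.1
    have hnorm1 : ‖(s:ℂ) ^ (α k - (m k:ℂ) - 1)‖ = s ^ ((α k).re - 1) / s ^ (m k) := by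
      rw [Complex.norm_cpow_eq_rpow_re_of_pos hspos]
      rw [show (α k - (m k:ℂ) - 1).re = ((α k).re - 1) - (m k : ℝ) by simp; ring]
      rw [Real.rpow_sub hspos, Real.rpow_natCast]
    have hs1 : s ^ ((α k).re - 1) ≤ M' := rpow_le_max hc0 hs.1.le hs.2.le
    have hs2 : s ^ ((α k).re - 1) / s ^ (m k) ≤ M' / c ^ (m k) :=
      div_le_div₀ hM'0.le hs1 (pow_pos hc0 _) (pow_le_pow_left₀ hc0.le hs.1.le _)
    have hαle : ‖α k - (m k:ℂ)‖ ≤ ‖α k‖ + 1 + m k := by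
      calc ‖α k - (m k:ℂ)‖ ≤ ‖α k‖ + ‖((m k : ℕ):ℂ)‖ := norm_sub_le _ _
        _ = ‖α k‖ + (m k : ℝ) := by rw [Complex.norm_natCast]
        _ ≤ ‖α k‖ + 1 + m k := by linarith
    have hαnn : (0:ℝ) ≤ ‖α k - (m k:ℂ)‖ := norm_nonneg _
    have hrfl : h' m s = B m * ((α k - (m k:ℂ)) * (s:ℂ) ^ (α k - (m k:ℂ) - 1)) := rfl
    rw [hrfl, norm_mul, norm_mul (α k - (m k:ℂ)) ((s:ℂ) ^ (α k - (m k:ℂ) - 1)), hnorm1, hBnorm m]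
    calc ‖K‖ * ‖cm α γ a b m‖ * ((∏ l ∈ Finset.univ.erase k, (x (1,l) / x (0,l)) ^ m l) * t ^ m k) *
          (‖α k - (m k:ℂ)‖ * (s ^ ((α k).re - 1) / s ^ (m k)))
        ≤ ‖K‖ * ‖cm α γ a b m‖ * ((∏ l ∈ Finset.univ.erase k, (x (1,l) / x (0,l)) ^ m l) * t ^ m k) *
          ((‖α k‖ + 1 + m k) * (M' / c ^ (m k))) := by
          apply mul_le_mul_of_nonneg_left _ (mul_nonneg (mul_nonneg (norm_nonneg _) (norm_nonneg _)) (hRtnn m))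
          apply mul_le_mul hαle hs2 _ (by positivity)
          · apply div_nonneg (Real.rpow_nonneg hspos.le _) (pow_nonneg hspos.le _)
      _ ≤ (‖K‖ * M' * (Cγ * Cab)) * w m := hfinish m M' (‖α k‖ + 1 + m k) hM'0 (by positivity) le_rfl
  -- main derivative statement
  have hmain : HasDerivAt (fun s => Fser α γ a b (Function.update x (0,k) s)) (∑' m, h' m s₀) s₀ := by
    apply hasDerivAt_of_tendstoUniformlyOn (f := fun (F : Finset (Fin n → ℕ)) s => ∑ m ∈ F, h m s)
      (f' := fun (F : Finset (Fin n → ℕ)) s => ∑ m ∈ F, h' m s)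
      (g := fun s => Fser α γ a b (Function.update x (0,k) s))
      (g' := fun s => ∑' m, h' m s)
      (l := (atTop : Filter (Finset (Fin n → ℕ))))
      (show IsOpen S from isOpen_Ioo) ?_ ?_ ?_ hs₀S
    · exact tendstoUniformlyOn_tsum (hsumw.mul_left _) (fun m s hs => hbound2 m s hs)
    · apply Eventually.of_forall
      intro F s hs
      exact HasDerivAt.fun_sum (fun m _ => hderiv m s hs)
    · intro s hs
      have hsummable : Summable (fun m => h m s) := by
        apply Summable.of_norm_bounded (hsumw.mul_left (‖K‖ * M * (Cγ * Cab)))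
        exact fun m => hbound1 m s hs
      have h1 : HasSum (fun m => h m s) (Fser α γ a b (Function.update x (0,k) s)) := by
        rw [hg_eq s]; exact hsummable.hasSum
      exact h1
  have hpd : pd (0,k) (Fser α γ a b) x = ∑' m, h' m s₀ := by
    rw [pd]
    exact hmain.deriv
  rw [hpd]
  -- the contiguity identity
  set α' : Fin n → ℂ := Function.update α k (α k - 1) with hα'def
  have hα'ne : ∀ l, l ≠ k → α' l = α l := fun l hl => Function.update_of_ne hl _ _
  have hα'k : α' k = α k - 1 := Function.update_self _ _ _
  have e6 : (∏ l, (x (0,l) : ℂ) ^ α' l) = (s₀:ℂ) ^ (α k - 1) * K := by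
    rw [← Finset.mul_prod_erase Finset.univ _ (Finset.mem_univ k), hα'k, hKdef]
    congr 1
    exact Finset.prod_congr rfl fun l hl => by rw [hα'ne l (Finset.ne_of_mem_erase hl)]
  have e7 : ∀ m : Fin n → ℕ, cm α' γ a b m * (α k) = cm α γ a b m * (α k - m k) := by
    intro m
    have key := asc_contig (-(α k)) (m k)
    have hsplitα : (∏ l, (ascPochhammer ℂ (m l)).eval (-(α l)))
        = (ascPochhammer ℂ (m k)).eval (-(α k)) *
          ∏ l ∈ Finset.univ.erase k, (ascPochhammer ℂ (m l)).eval (-(α l)) :=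
      (Finset.mul_prod_erase Finset.univ _ (Finset.mem_univ k)).symm
    have hsplitα' : (∏ l, (ascPochhammer ℂ (m l)).eval (-(α' l)))
        = (ascPochhammer ℂ (m k)).eval (-(α k) + 1) *
          ∏ l ∈ Finset.univ.erase k, (ascPochhammer ℂ (m l)).eval (-(α l)) := by
      rw [← Finset.mul_prod_erase Finset.univ _ (Finset.mem_univ k), hα'k]
      congr 1
      · congr 1; ring
      · exact Finset.prod_congr rfl fun l hl => by rw [hα'ne l (Finset.ne_of_mem_erase hl)]
    unfold cm
    rw [hsplitα, hsplitα', div_eq_mul_inv, div_eq_mul_inv]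
    linear_combination (((-1:ℂ)^(∑ l, m l) *
      (∏ l ∈ Finset.univ.erase k, (ascPochhammer ℂ (m l)).eval (-(α l))) *
      ((b:ℂ) ^ (γ + ((∑ l, m l : ℕ):ℂ) + 1) - (a:ℂ) ^ (γ + ((∑ l, m l : ℕ):ℂ) + 1)) *
      ((γ + ((∑ l, m l : ℕ):ℂ) + 1) * ∏ l, (((m l).factorial : ℕ):ℂ))⁻¹)) * key
  have e8 : ∀ m : Fin n → ℕ, h' m s₀ =
      (α k * ∏ l, (x (0,l) : ℂ) ^ α' l) * (cm α' γ a b m * ∏ l, ((x (1,l) / x (0,l) : ℝ) : ℂ) ^ m l) := by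
    intro m
    have hs₀ne : (s₀:ℂ) ≠ 0 := Complex.ofReal_ne_zero.mpr hs₀pos.ne'
    have hratio : (∏ l, ((x (1,l) / x (0,l) : ℝ) : ℂ) ^ m l) = ((t / s₀ : ℝ):ℂ) ^ m k * Rm m := by
      rw [← Finset.mul_prod_erase Finset.univ _ (Finset.mem_univ k), hRmdef]
    have e9 : (s₀:ℂ) ^ (α k - (m k:ℂ) - 1) = (s₀:ℂ) ^ (α k - 1) / (s₀:ℂ) ^ (m k) := by
      rw [show α k - (m k:ℂ) - 1 = (α k - 1) - (m k:ℂ) by ring,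
        Complex.cpow_sub _ _ hs₀ne, Complex.cpow_natCast]
    have e10 : ((t / s₀ : ℝ):ℂ) = (t:ℂ) / (s₀:ℂ) := by push_cast; ring
    rw [hh'def]
    simp only []
    rw [hBdef]
    simp only []
    rw [e6, hratio, e9, e10, div_pow]
    linear_combination (-(K * Rm m * ((t:ℂ) ^ m k) * ((s₀:ℂ) ^ (α k - 1)) / ((s₀:ℂ) ^ (m k)))) * (e7 m)
  rw [Fser, ← mul_assoc, ← tsum_mul_left]
  exact tsum_congr e8
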